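/- Let 𝒮 be a nonempty set family on a finite universe V in which every set has cardinality at most k, and let U₁, …, U_L (L ≥ 1) be a partition of V. For each j ∈ [L] define 𝒮_j = {S ∈ 𝒮 : S ∩ U_j ≠ ∅} ∪ {S ⊆ V \ U_j : |S| ≤ k}. Then ⋂_{j=1}^{L} 𝒮_j^↓ = 𝒮^↓. -/

import Mathlib

/-- Decomposition of the downward closure: if `U 1, …, U L` partition `V` and
`𝒮_j = {S ∈ 𝒮 : S ∩ U j ≠ ∅} ∪ {S ⊆ V \ U j : |S| ≤ k}`, then
`⋂_j 𝒮_j^↓ = 𝒮^↓`. -/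
theorem downward_closure_decomposition
    {V : Type*} [Fintype V] [DecidableEq V]
    (k L : ℕ) (hL : 1 ≤ L)
    (𝒮 : Set (Finset V)) (h𝒮 : 𝒮.Nonempty)
    (hcard : ∀ S ∈ 𝒮, S.card ≤ k)
    (U : Fin L → Finset V)
    (hdisj : ∀ i j : Fin L, i ≠ j → Disjoint (U i) (U j))
    (hcover : ∀ v : V, ∃ j : Fin L, v ∈ U j) :
    ∀ T : Finset V,
      (∀ j : Fin L, ∃ S : Finset V,
          ((S ∈ 𝒮 ∧ (S ∩ U j).Nonempty) ∨ (S ∩ U j = ∅ ∧ S.card ≤ k)) ∧ T ⊆ S)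
        ↔ ∃ S ∈ 𝒮, T ⊆ S := by
  intro T
  constructor
  · intro h
    by_cases hT : ∀ j : Fin L, T ∩ U j = ∅
    · have hTe : T = ∅ := by
        by_contra hne
        obtain ⟨v, hv⟩ := Finset.nonempty_iff_ne_empty.2 hne
        obtain ⟨j, hj⟩ := hcover v
        have hmem : v ∈ T ∩ U j := Finset.mem_inter.2 ⟨hv, hj⟩
        simp [hT j] at hmem
      obtain ⟨S, hS⟩ := h𝒮
      exact ⟨S, hS, by simp [hTe]⟩
    · push_neg at hT
      obtain ⟨j, hj⟩ := hT
      obtain ⟨S, hS, hTS⟩ := h j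
      rcases hS with ⟨hS𝒮, _⟩ | ⟨hd, _⟩
      · exact ⟨S, hS𝒮, hTS⟩
      · exfalso
        apply Finset.nonempty_iff_ne_empty.1 hj
        have hsub : T ∩ U j ⊆ S ∩ U j :=
          Finset.inter_subset_inter hTS (Finset.Subset.refl _)
        rw [hd] at hsub
        exact Finset.subset_empty.1 hsub
  · rintro ⟨S, hS, hTS⟩
    intro j
    refine ⟨S, ?_, hTS⟩
    by_cases hne : (S ∩ U j).Nonempty
    · exact Or.inl ⟨hS, hne⟩
    · exact Or.inr ⟨Finset.not_nonempty_iff_eq_empty.1 hne, hcard S hS⟩
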